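/- Let S be a cofibrantly generated model category, (C, D) a pair of small categories and η : X → Y a morphism in S^C. (i) If c is an object of C and η is a (D ∪ {c})-weak equivalence, then X satisfies D-codescent at c if and only if Y satisfies D-codescent at c. (ii) If η is a C-weak equivalence, then X satisfies D-codescent if and only if Y satisfies D-codescent. -/

import Mathlib

/-! Preliminaries: basic notions of homotopical algebra (lifting properties,
model structures, transfinite compositions, relative cell complexes, smallness,
cofibrant generation) and the relative model structure `U_S(C,D)` on functor
categories, following Balmer–Matthey, "Codescent theory I". -/

universe w v u u₂ u₃

open CategoryTheory Limits

namespace Codescent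

set_option linter.dupNamespace false

section Lifting

variable {M : Type u} [Category.{v} M]

/-- The class of morphisms having the left lifting property with respect to all
morphisms in `K`. -/
def llp (K : MorphismProperty M) : MorphismProperty M :=
  fun _ _ f => ∀ ⦃X Y : M⦄ (g : X ⟶ Y), K g → HasLiftingProperty f g

/-- The class of morphisms having the right lifting property with respect to all
morphisms in `K`. -/
def rlp (K : MorphismProperty M) : MorphismProperty M :=
  fun _ _ g => ∀ ⦃A B : M⦄ (f : A ⟶ B), K f → HasLiftingProperty f g

/-- Intersection of two classes of morphisms. -/
def inter (P Q : MorphismProperty M) : MorphismProperty M :=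
  fun _ _ f => P f ∧ Q f

/-- `f` is a retract of `g` (as objects of the arrow category). -/
def RetractHom {X Y X' Y' : M} (f : X ⟶ Y) (g : X' ⟶ Y') : Prop :=
  ∃ (i : Arrow.mk f ⟶ Arrow.mk g) (r : Arrow.mk g ⟶ Arrow.mk f), i ≫ r = 𝟙 (Arrow.mk f)

/-- The object `c` is a retract of the object `d`. -/
def IsRetractObj (c d : M) : Prop :=
  ∃ (i : c ⟶ d) (r : d ⟶ c), i ≫ r = 𝟙 c

/-- A functorial factorization of every morphism as a morphism in `L` followed by
a morphism in `R`. -/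
structure FunctorialFact (L R : MorphismProperty M) where
  Z : Arrow M ⥤ M
  ι : (Arrow.leftFunc : Arrow M ⥤ M) ⟶ Z
  π : Z ⟶ (Arrow.rightFunc : Arrow M ⥤ M)
  fac : ∀ f : Arrow M, ι.app f ≫ π.app f = f.hom
  mem_left : ∀ f : Arrow M, L (ι.app f)
  mem_right : ∀ f : Arrow M, R (π.app f)

end Lifting

/-- A (Quillen) model structure on a category `M`: classes of weak equivalences,
cofibrations and fibrations satisfying MC2–MC5 (MC1, completeness and
cocompleteness, is imposed separately as `HasLimits`/`HasColimits`). -/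
structure ModelStructure (M : Type u) [Category.{v} M] where
  weq : MorphismProperty M
  cof : MorphismProperty M
  fib : MorphismProperty M
  /-- MC2, two-out-of-three -/
  weq_comp : ∀ {X Y Z : M} (f : X ⟶ Y) (g : Y ⟶ Z), weq f → weq g → weq (f ≫ g)
  weq_cancel_left : ∀ {X Y Z : M} (f : X ⟶ Y) (g : Y ⟶ Z), weq f → weq (f ≫ g) → weq g
  weq_cancel_right : ∀ {X Y Z : M} (f : X ⟶ Y) (g : Y ⟶ Z), weq g → weq (f ≫ g) → weq f
  /-- MC3, closure under retracts -/
  weq_retract : ∀ {X Y X' Y' : M} (f : X ⟶ Y) (g : X' ⟶ Y'), RetractHom f g → weq g → weq f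
  cof_retract : ∀ {X Y X' Y' : M} (f : X ⟶ Y) (g : X' ⟶ Y'), RetractHom f g → cof g → cof f
  fib_retract : ∀ {X Y X' Y' : M} (f : X ⟶ Y) (g : X' ⟶ Y'), RetractHom f g → fib g → fib f
  /-- MC4, lifting -/
  cof_lift : ∀ {A B X Y : M} (f : A ⟶ B) (g : X ⟶ Y),
    cof f → weq g → fib g → HasLiftingProperty f g
  fib_lift : ∀ {A B X Y : M} (f : A ⟶ B) (g : X ⟶ Y),
    weq f → cof f → fib g → HasLiftingProperty f g
  /-- MC5, functorial factorizations -/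
  fact₁ : FunctorialFact (M := M) cof (inter weq fib)
  fact₂ : FunctorialFact (M := M) (inter weq cof) fib

section Transfinite

/-- A well-ordered type (with bottom element and successors), the index for
transfinite compositions (a "λ-sequence" index). -/
structure WOType : Type (w + 1) where
  carrier : Type w
  [lin : LinearOrder carrier]
  [succ : SuccOrder carrier]
  [bot : OrderBot carrier]
  [wf : WellFoundedLT carrier]

attribute [instance] WOType.lin WOType.succ WOType.bot WOType.wf

variable {M : Type u} [Category.{v} M] {N : Type u₂} [Category.{v} N]

/-- The class of pushouts of morphisms of `K`. -/
def pushoutsOf (K : MorphismProperty M) : MorphismProperty M :=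
  fun X Y f => ∃ (A B : M) (g : A ⟶ B) (t : A ⟶ X) (b : B ⟶ Y), K g ∧ IsPushout g t b f

/-- The inclusion functor of `{i // i < j}` into a preorder `J`. -/
def iioIncl {J : Type w} [Preorder J] (j : J) : {i : J // i < j} ⥤ J where
  obj i := i.1
  map {i i'} h := homOfLE (Subtype.coe_le_coe.mpr (leOfHom h))

/-- The cocone on the restriction of `F : J ⥤ M` to `{i // i < j}` with apex `F.obj j`. -/
def iioCocone {J : Type w} [Preorder J] (F : J ⥤ M) (j : J) : Cocone (iioIncl j ⋙ F) where
  pt := F.obj j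
  ι :=
    { app := fun i => F.map (homOfLE i.2.le)
      naturality := fun i i' h => by
        dsimp
        rw [Category.comp_id, ← F.map_comp]
        rfl }

/-- `F : J ⥤ M` is a (continuous) transfinite sequence all of whose successor
maps lie in the class `P`. -/
structure IsChainOf (P : MorphismProperty M) {J : Type w} [LinearOrder J] [SuccOrder J]
    (F : J ⥤ M) : Prop where
  succ_mem : ∀ j : J, ¬ IsMax j → P (F.map (homOfLE (Order.le_succ j)))
  limit_isColimit : ∀ j : J, Order.IsSuccLimit j → Nonempty (IsColimit (iioCocone F j))

/-- The class of relative `K`-cells: transfinite compositions of pushouts of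
morphisms of `K`. -/
def cell (K : MorphismProperty M) : MorphismProperty M :=
  fun X Y f => ∃ (J : WOType.{v}) (F : J.carrier ⥤ M)
    (_ : IsChainOf (pushoutsOf K) F) (c : Cocone F) (_ : IsColimit c)
    (e : X ≅ F.obj ⊥) (e' : c.pt ≅ Y), f = e.hom ≫ c.ι.app ⊥ ≫ e'.hom

/-- A linear order is `κ`-filtered when it has no top element and every subset of
cardinality at most `κ` is bounded above. -/
def KFiltered (κ : Cardinal.{w}) (J : Type w) [LinearOrder J] : Prop :=
  (∀ j : J, ∃ j' : J, j < j') ∧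
    ∀ s : Set J, Cardinal.mk s ≤ κ → ∃ j : J, ∀ i ∈ s, i ≤ j

/-- The object `d` is small relative to the class `K`: for some cardinal `κ`,
morphisms from `d` into the colimit of any `κ`-filtered well-ordered continuous
sequence with successor maps in `K` factor, essentially uniquely, through some
stage of the sequence. -/
def IsSmallRel (d : M) (K : MorphismProperty M) : Prop :=
  ∃ κ : Cardinal.{v}, ∀ (J : WOType.{v}), KFiltered κ J.carrier →
    ∀ (F : J.carrier ⥤ M), IsChainOf K F →
    ∀ (c : Cocone F), IsColimit c →
      (∀ g : d ⟶ c.pt, ∃ (j : J.carrier) (h : d ⟶ F.obj j), h ≫ c.ι.app j = g) ∧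
      (∀ (j j' : J.carrier) (h : d ⟶ F.obj j) (h' : d ⟶ F.obj j'),
        h ≫ c.ι.app j = h' ≫ c.ι.app j' →
          ∃ (k : J.carrier) (l : j ≤ k) (l' : j' ≤ k),
            h ≫ F.map (homOfLE l) = h' ≫ F.map (homOfLE l'))

/-- The model structure `P` is cofibrantly generated, with set of generating
cofibrations `I` and set of generating trivial cofibrations `J`. -/
structure IsCofGen (P : ModelStructure M) (I J : MorphismProperty M) : Prop where
  small_I : ∀ ⦃X Y : M⦄ (f : X ⟶ Y), I f → IsSmallRel X (cell I)
  small_J : ∀ ⦃X Y : M⦄ (f : X ⟶ Y), J f → IsSmallRel X (cell J)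
  fib_eq : P.fib = rlp J
  trivFib_eq : inter P.weq P.fib = rlp I

/-- A functor preserves pushouts. -/
def PreservesPushouts (G : M ⥤ N) : Prop :=
  ∀ ⦃Z X Y P : M⦄ (f : Z ⟶ X) (g : Z ⟶ Y) (inl : X ⟶ P) (inr : Y ⟶ P),
    IsPushout f g inl inr → IsPushout (G.map f) (G.map g) (G.map inl) (G.map inr)

/-- A functor preserves transfinite compositions: it preserves colimits of
diagrams indexed by well-ordered types. -/
def PreservesTransfiniteCompositions (G : M ⥤ N) : Prop :=
  ∀ (J : Type v) [LinearOrder J] [WellFoundedLT J] (F : J ⥤ M) (c : Cocone F),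
    IsColimit c → Nonempty (IsColimit (G.mapCocone c))

/-- The image `{G(f) | f ∈ K}` of a class of morphisms under a functor. -/
def strictImage (G : M ⥤ N) (K : MorphismProperty M) : MorphismProperty N :=
  fun _ _ g => ∃ (A B : M) (f : A ⟶ B), K f ∧ Arrow.mk (G.map f) = Arrow.mk g

end Transfinite

section CofRep

variable {M : Type u} [Category.{v} M]

/-- The cofibrant replacement of `X` given by the functorial factorization of
`∅ ⟶ X`. -/
noncomputable def cofRep (P : ModelStructure M) [HasInitial M] (X : M) : M :=
  P.fact₁.Z.obj (Arrow.mk (initial.to X))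

/-- The canonical trivial fibration `QX ⟶ X` from the cofibrant replacement. -/
noncomputable def cofRepHom (P : ModelStructure M) [HasInitial M] (X : M) :
    cofRep P X ⟶ X :=
  P.fact₁.π.app (Arrow.mk (initial.to X))

/-- The functor `X ↦ (∅ ⟶ X)` to the arrow category. -/
noncomputable def toArrowInit (M : Type u) [Category.{v} M] [HasInitial M] : M ⥤ Arrow M where
  obj X := Arrow.mk (initial.to X)
  map {X Y} f := Arrow.homMk (u := 𝟙 _) (v := f) (by apply initial.hom_ext)

/-- The cofibrant replacement functor of the model structure `P`. -/
noncomputable def qFunctor (P : ModelStructure M) [HasInitial M] : M ⥤ M :=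
  toArrowInit M ⋙ P.fact₁.Z

end CofRep

section FunctorCat

variable {S : Type u} [Category.{v} S]

/-- The class of morphisms in `S^C` that belong objectwise on `D` to the class `P`;
for `P` the weak equivalences (resp. fibrations) of a model structure these are
the `D`-weak equivalences (resp. the `D`-fibrations). -/
def objProp {C : Type v} [SmallCategory C] (P : MorphismProperty S) (D : Set C) :
    MorphismProperty (C ⥤ S) :=
  fun _ _ η => ∀ d ∈ D, P (η.app d)

/-- Trivial `D`-fibrations in `S^C`. -/
def dTrivFib {C : Type v} [SmallCategory C] (P : ModelStructure S) (D : Set C) :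
    MorphismProperty (C ⥤ S) :=
  inter (objProp P.weq D) (objProp P.fib D)

/-- `D`-cofibrations in `S^C`: the morphisms having the left lifting property with
respect to all trivial `D`-fibrations. -/
def dCof {C : Type v} [SmallCategory C] (P : ModelStructure S) (D : Set C) :
    MorphismProperty (C ⥤ S) :=
  llp (dTrivFib P D)

variable [HasColimits S]

/-- `D`-cofibrant objects of `S^C`. -/
def dCofibrant {C : Type v} [SmallCategory C] (P : ModelStructure S) (D : Set C)
    (X : C ⥤ S) : Prop :=
  dCof P D (initial.to X)

/-- The model structure `U_S(C,D)` on `S^C`: a model structure whose weak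
equivalences are the `D`-weak equivalences, whose fibrations are the
`D`-fibrations and whose cofibrations are the `D`-cofibrations. -/
structure RelStructure (P : ModelStructure S) (C : Type v) [SmallCategory C] (D : Set C) where
  N : ModelStructure (C ⥤ S)
  weq_eq : N.weq = objProp P.weq D
  fib_eq : N.fib = objProp P.fib D
  cof_eq : N.cof = dCof P D

/-- `X` satisfies `D`-codescent at `c`: the cofibrant replacement morphism
`Q_{C,D} X ⟶ X` in `U_S(C,D)` is a weak equivalence at `c`. -/
def CodescentAt {C : Type v} [SmallCategory C] (P : ModelStructure S) {D : Set C}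
    (U : RelStructure P C D) (X : C ⥤ S) (c : C) : Prop :=
  P.weq ((cofRepHom U.N X).app c)

/-- `X` satisfies `D`-codescent: the cofibrant replacement morphism
`Q_{C,D} X ⟶ X` is a `C`-weak equivalence. -/
def Codescent {C : Type v} [SmallCategory C] (P : ModelStructure S) {D : Set C}
    (U : RelStructure P C D) (X : C ⥤ S) : Prop :=
  ∀ c : C, CodescentAt P U X c

/-- The coproduct property for weak equivalences. -/
def CoproductProperty (P : ModelStructure S) : Prop :=
  ∀ (ι : Type v) (X Y : ι → S) (f : ∀ i, X i ⟶ Y i),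
    (∀ i, P.weq (f i)) ↔ P.weq (Limits.Sigma.map f)

end FunctorCat

section Pairs

variable {A : Type v} [SmallCategory A] {C : Type v} [SmallCategory C]

/-- Two subsets of objects are retract equivalent. -/
def RetractEquiv (D D' : Set C) : Prop :=
  (∀ d ∈ D, ∃ d' ∈ D', IsRetractObj d d') ∧ (∀ d' ∈ D', ∃ d ∈ D, IsRetractObj d' d)

/-- `Φ : (A,B) ⟶ (C,D)` is left glossy. -/
def LeftGlossy (Φ : A ⥤ C) (B : Set A) : Prop :=
  ∀ b ∈ B, ∃ (ι : Type v) (tgt : ι → A) (β : ∀ i, Φ.obj b ⟶ Φ.obj (tgt i)),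
    (∀ i, tgt i ∈ B) ∧
      ∀ (a : A) (α : Φ.obj b ⟶ Φ.obj a),
        ∃! p : (i : ι) × (tgt i ⟶ a), β p.1 ≫ Φ.map p.2 = α

/-- `Φ : (A,B) ⟶ (C,D)` is right glossy. -/
def RightGlossy (Φ : A ⥤ C) (B : Set A) : Prop :=
  ∀ b ∈ B, ∃ (ι : Type v) (src : ι → A) (β : ∀ j, Φ.obj (src j) ⟶ Φ.obj b),
    (∀ j, src j ∈ B) ∧
      ∀ (a : A) (α : Φ.obj a ⟶ Φ.obj b),
        ∃! p : (j : ι) × (a ⟶ src j), Φ.map p.2 ≫ β p.1 = α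

/-- A subset of objects is left absorbant: the source of any morphism whose
target lies in the subset also lies in the subset. -/
def LeftAbsorbant (D : Set C) : Prop :=
  ∀ ⦃c c' : C⦄, (c ⟶ c') → c' ∈ D → c ∈ D

end Pairs

end Codescent
open Codescent


namespace Codescent

section Aux

variable {M : Type*} [Category M]

lemma weq_id_src (P : ModelStructure M) {X Y : M} (f : X ⟶ Y) (hf : P.weq f) :
    P.weq (𝟙 X) :=
  P.weq_cancel_right (𝟙 X) f hf (by rw [Category.id_comp]; exact hf)

lemma weq_id_tgt (P : ModelStructure M) {X Y : M} (f : X ⟶ Y) (hf : P.weq f) :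
    P.weq (𝟙 Y) :=
  P.weq_cancel_left f (𝟙 Y) hf (by rw [Category.comp_id]; exact hf)

lemma fib_of_rlp (P : ModelStructure M) {X Y : M} (p : X ⟶ Y)
    (h : ∀ ⦃A B : M⦄ (f : A ⟶ B), P.weq f → P.cof f → HasLiftingProperty f p) :
    P.fib p := by
  obtain ⟨hjw, hjc⟩ := P.fact₂.mem_left (Arrow.mk p)
  have hq := P.fact₂.mem_right (Arrow.mk p)
  have hfac : P.fact₂.ι.app (Arrow.mk p) ≫ P.fact₂.π.app (Arrow.mk p) = p := by
    simpa using P.fact₂.fac (Arrow.mk p)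
  haveI : HasLiftingProperty (A := X) (P.fact₂.ι.app (Arrow.mk p)) p := h _ hjw hjc
  have sq : CommSq (𝟙 X) (P.fact₂.ι.app (Arrow.mk p)) p (P.fact₂.π.app (Arrow.mk p)) :=
    ⟨(Category.id_comp p).trans hfac.symm⟩
  haveI : sq.HasLift := this.sq_hasLift sq
  refine P.fib_retract p (P.fact₂.π.app (Arrow.mk p))
    ⟨Arrow.homMk (u := P.fact₂.ι.app (Arrow.mk p)) (v := 𝟙 Y) (hfac.trans (Category.comp_id p).symm),
     Arrow.homMk (u := sq.lift) (v := 𝟙 Y) (sq.fac_right.trans (Category.comp_id _).symm), ?_⟩ hq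
  ext
  · exact sq.fac_left
  · exact Category.id_comp _

lemma weq_of_llp_fib (P : ModelStructure M) {X Y : M} (g : X ⟶ Y)
    (h : ∀ ⦃E F : M⦄ (p : E ⟶ F), P.fib p → HasLiftingProperty g p) : P.weq g := by
  obtain ⟨hjw, hjc⟩ := P.fact₂.mem_left (Arrow.mk g)
  have hq := P.fact₂.mem_right (Arrow.mk g)
  have hfac : P.fact₂.ι.app (Arrow.mk g) ≫ P.fact₂.π.app (Arrow.mk g) = g := by
    simpa using P.fact₂.fac (Arrow.mk g)
  haveI := h _ hq
  have sq : CommSq (W := X) (P.fact₂.ι.app (Arrow.mk g)) g (P.fact₂.π.app (Arrow.mk g)) (𝟙 Y) :=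
    ⟨hfac.trans (Category.comp_id g).symm⟩
  haveI : sq.HasLift := this.sq_hasLift sq
  refine P.weq_retract g (P.fact₂.ι.app (Arrow.mk g))
    ⟨Arrow.homMk (u := 𝟙 X) (v := sq.lift) ((Category.id_comp _).trans sq.fac_left.symm),
     Arrow.homMk (u := 𝟙 X) (v := P.fact₂.π.app (Arrow.mk g)) ((Category.id_comp g).trans hfac.symm),
     ?_⟩ hjw
  ext
  · exact Category.id_comp _
  · exact sq.fac_right

lemma fib_pi (P : ModelStructure M) {E F : M} (p : E ⟶ F) (hp : P.fib p) (ι : Type*)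
    [HasProduct (fun _ : ι => E)] [HasProduct (fun _ : ι => F)] :
    P.fib (Pi.lift fun g : ι => Pi.π (fun _ : ι => E) g ≫ p) := by
  apply fib_of_rlp
  intro A B f hw hc
  haveI := P.fib_lift f p hw hc hp
  constructor
  intro u v sq
  have hπ : ∀ i : ι, (Pi.lift fun g : ι => Pi.π (fun _ : ι => E) g ≫ p) ≫
      Pi.π (fun _ : ι => F) i = Pi.π (fun _ : ι => E) i ≫ p := fun i => Pi.lift_π _ i
  have sqi : ∀ i : ι, CommSq (u ≫ Pi.π (fun _ : ι => E) i) f p (v ≫ Pi.π (fun _ : ι => F) i) := by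
    intro i
    constructor
    rw [Category.assoc, ← hπ i, ← Category.assoc, sq.w, Category.assoc]
  exact ⟨⟨{ l := Pi.lift fun i => (sqi i).lift
            fac_left := Pi.hom_ext _ _ fun i => by
              rw [Category.assoc, Pi.lift_π]; exact (sqi i).fac_left
            fac_right := Pi.hom_ext _ _ fun i => by
              rw [Category.assoc, hπ i, ← Category.assoc, Pi.lift_π]
              exact (sqi i).fac_right }⟩⟩

lemma cofRep_init_cof [HasInitial M] (P : ModelStructure M) (X : M) :
    P.cof (initial.to (cofRep P X)) := by
  have h := P.fact₁.mem_left (Arrow.mk (initial.to X))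
  have e : initial.to (cofRep P X) = P.fact₁.ι.app (Arrow.mk (initial.to X)) :=
    initial.hom_ext _ _
  rw [e]; exact h

end Aux

section AuxFun

variable {S : Type u} [Category.{v} S] [HasLimits S] [HasColimits S]
  {P : ModelStructure S} {C : Type v} [SmallCategory C] {D : Set C}
  (U : RelStructure P C D)

lemma app_weq_of_trivCof {A B : C ⥤ S} (j : A ⟶ B) (hw : U.N.weq j) (hc : U.N.cof j)
    (c : C) : P.weq (j.app c) := by
  apply weq_of_llp_fib
  intro E F p hp
  have hRfib : U.N.fib ((evaluationRightAdjoint S c).map p) := by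
    rw [U.fib_eq]
    intro d _
    exact fib_pi P p hp (d ⟶ c)
  have h := ((evaluationAdjunctionLeft S c).hasLiftingProperty_iff j p).mpr
    (U.N.fib_lift j _ hw hc hRfib)
  exact h

lemma cof_coprod_inl {A B : C ⥤ S} (hB : U.N.cof (initial.to B)) :
    U.N.cof (coprod.inl : A ⟶ A ⨿ B) := by
  rw [U.cof_eq] at hB ⊢
  intro X' Y' p hp
  haveI := hB p hp
  constructor
  intro u v sq
  have sq' : CommSq (initial.to X') (initial.to B) p (coprod.inr ≫ v) :=
    ⟨initial.hom_ext _ _⟩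
  refine ⟨⟨{ l := coprod.desc u sq'.lift, fac_left := coprod.inl_desc _ _, fac_right := ?_ }⟩⟩
  apply coprod.hom_ext
  · rw [coprod.inl_desc_assoc, sq.w]
  · rw [coprod.inr_desc_assoc, sq'.fac_right]

lemma cof_coprod_inr {A B : C ⥤ S} (hA : U.N.cof (initial.to A)) :
    U.N.cof (coprod.inr : B ⟶ A ⨿ B) := by
  rw [U.cof_eq] at hA ⊢
  intro X' Y' p hp
  haveI := hA p hp
  constructor
  intro u v sq
  have sq' : CommSq (initial.to X') (initial.to A) p (coprod.inl ≫ v) :=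
    ⟨initial.hom_ext _ _⟩
  refine ⟨⟨{ l := coprod.desc sq'.lift u, fac_left := coprod.inr_desc _ _, fac_right := ?_ }⟩⟩
  apply coprod.hom_ext
  · rw [coprod.inl_desc_assoc, sq'.fac_right]
  · rw [coprod.inr_desc_assoc, sq.w]

lemma cof_comp {A B B' : C ⥤ S} (f : A ⟶ B) (g : B ⟶ B')
    (hf : U.N.cof f) (hg : U.N.cof g) : U.N.cof (f ≫ g) := by
  rw [U.cof_eq] at hf hg ⊢
  intro X' Y' p hp
  haveI := hf p hp
  haveI := hg p hp
  infer_instance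

lemma weq_app_of_weq_cof {A B : C ⥤ S} (f : A ⟶ B) (hf : U.N.weq f)
    (hA : U.N.cof (initial.to A)) (hB : U.N.cof (initial.to B)) (c : C) :
    P.weq (f.app c) := by
  set φ : A ⨿ B ⟶ B := coprod.desc f (𝟙 B) with hφ
  set k : A ⨿ B ⟶ U.N.fact₁.Z.obj (Arrow.mk φ) := U.N.fact₁.ι.app (Arrow.mk φ) with hk
  set q : U.N.fact₁.Z.obj (Arrow.mk φ) ⟶ B := U.N.fact₁.π.app (Arrow.mk φ) with hq
  have hkc : U.N.cof k := U.N.fact₁.mem_left (Arrow.mk φ)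
  obtain ⟨hqw, hqf⟩ : U.N.weq q ∧ U.N.fib q := U.N.fact₁.mem_right (Arrow.mk φ)
  have hfac : k ≫ q = φ := U.N.fact₁.fac (Arrow.mk φ)
  have hjAq : (coprod.inl ≫ k) ≫ q = f := by
    rw [Category.assoc, hfac, hφ, coprod.inl_desc]
  have hjBq : (coprod.inr ≫ k) ≫ q = 𝟙 B := by
    rw [Category.assoc, hfac, hφ, coprod.inr_desc]
  have hjAw : U.N.weq (coprod.inl ≫ k) :=
    U.N.weq_cancel_right _ q hqw (by rw [hjAq]; exact hf)
  have hjBw : U.N.weq (coprod.inr ≫ k) :=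
    U.N.weq_cancel_right _ q hqw (by rw [hjBq]; exact weq_id_tgt U.N q hqw)
  have hjAc : U.N.cof (coprod.inl ≫ k) := cof_comp U _ _ (cof_coprod_inl U hB) hkc
  have hjBc : U.N.cof (coprod.inr ≫ k) := cof_comp U _ _ (cof_coprod_inr U hA) hkc
  have hA' : P.weq ((coprod.inl ≫ k).app c) := app_weq_of_trivCof U _ hjAw hjAc c
  have hB' : P.weq ((coprod.inr ≫ k).app c) := app_weq_of_trivCof U _ hjBw hjBc c
  have hq' : P.weq (q.app c) := by
    apply P.weq_cancel_left ((coprod.inr ≫ k).app c) (q.app c) hB'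
    have e : (coprod.inr ≫ k).app c ≫ q.app c = 𝟙 (B.obj c) := by
      rw [← NatTrans.comp_app, hjBq]; rfl
    rw [e]
    exact weq_id_src P _ hB'
  have e : f.app c = (coprod.inl ≫ k).app c ≫ q.app c := by
    rw [← NatTrans.comp_app, hjAq]
  rw [e]
  exact P.weq_comp _ _ hA' hq'

end AuxFun

end Codescent

/-- weak invariance of codescent (Balmer–Matthey, Prop. 5.8). -/
theorem statement_8 {S : Type u} [Category.{v} S] [HasLimits S] [HasColimits S]
    (P : ModelStructure S) (I J : MorphismProperty S) (hcg : IsCofGen P I J)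
    {C : Type v} [SmallCategory C] (D : Set C) (U : RelStructure P C D)
    {X Y : C ⥤ S} (η : X ⟶ Y) :
    (∀ c : C, objProp P.weq (insert c D) η →
      (CodescentAt P U X c ↔ CodescentAt P U Y c)) ∧
    (objProp P.weq Set.univ η → (Codescent P U X ↔ Codescent P U Y)) := by
  have key : ∀ (_ : objProp P.weq D η) (c : C), P.weq (η.app c) →
      (CodescentAt P U X c ↔ CodescentAt P U Y c) := by
    intro hD c hηc
    set Qη : cofRep U.N X ⟶ cofRep U.N Y :=
      U.N.fact₁.Z.map ((toArrowInit (C ⥤ S)).map η) with hQ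
    have hnat : Qη ≫ cofRepHom U.N Y = cofRepHom U.N X ≫ η :=
      U.N.fact₁.π.naturality ((toArrowInit (C ⥤ S)).map η)
    have hwX : U.N.weq (cofRepHom U.N X) := (U.N.fact₁.mem_right _).1
    have hwY : U.N.weq (cofRepHom U.N Y) := (U.N.fact₁.mem_right _).1
    have hηD : U.N.weq η := by rw [U.weq_eq]; exact hD
    have hQw : U.N.weq Qη := U.N.weq_cancel_right Qη (cofRepHom U.N Y) hwY
      (by rw [hnat]; exact U.N.weq_comp _ _ hwX hηD)
    have hQc : P.weq (Qη.app c) :=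
      weq_app_of_weq_cof U Qη hQw (cofRep_init_cof U.N X) (cofRep_init_cof U.N Y) c
    have hsq : Qη.app c ≫ (cofRepHom U.N Y).app c = (cofRepHom U.N X).app c ≫ η.app c := by
      rw [← NatTrans.comp_app, ← NatTrans.comp_app, hnat]
    constructor
    · intro hX
      apply P.weq_cancel_left (Qη.app c) _ hQc
      rw [hsq]
      exact P.weq_comp _ _ hX hηc
    · intro hY
      apply P.weq_cancel_right _ (η.app c) hηc
      rw [← hsq]
      exact P.weq_comp _ _ hQc hY
  constructor
  · intro c hη
    exact key (fun d hd => hη d (Set.mem_insert_iff.mpr (Or.inr hd))) c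
      (hη c (Set.mem_insert c D))
  · intro hη
    have hD : objProp P.weq D η := fun d _ => hη d trivial
    constructor
    · intro h c
      exact (key hD c (hη c trivial)).mp (h c)
    · intro h c
      exact (key hD c (hη c trivial)).mpr (h c)
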